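/- For a combinatorial data fusion problem (V, E₀, w, ℱ), the maximum of Σ_{e ∈ E₁} w(e) over all feasible subsets E₁ ⊆ E₀ equals the maximum of the kept weight over all proper colorings χ : V → ℕ. -/

import Mathlib

/-- `E₁` is feasible: no connected component of the graph `(V, E₁)` contains a forbidden set. -/
def Feasible {V : Type*} (E₁ : Set (Sym2 V)) (ℱ : Set (Set V)) : Prop :=
  ∀ F ∈ ℱ, ¬ ∀ u ∈ F, ∀ v ∈ F, (SimpleGraph.fromEdgeSet E₁).Reachable u v

/-- `χ` is a proper coloring: no forbidden set is monochromatic. -/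
def ProperColoring {V : Type*} (χ : V → ℕ) (ℱ : Set (Set V)) : Prop :=
  ∀ F ∈ ℱ, ¬ ∃ j, ∀ v ∈ F, χ v = j

/-- The kept weight of a coloring: total weight of monochromatic edges. -/
noncomputable def keptWeight {V : Type*} (G : SimpleGraph V) (w : Sym2 V → ℝ)
    (χ : V → ℕ) : ℝ :=
  ∑ᶠ e ∈ {e ∈ G.edgeSet | ∀ u ∈ e, ∀ v ∈ e, χ u = χ v}, w e

/-- Colors are constant along reachability when every edge is monochromatic. -/
lemma reach_color_eq {V : Type*} {χ : V → ℕ} {E₁ : Set (Sym2 V)}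
    (hmono : ∀ e ∈ E₁, ∀ u ∈ e, ∀ v ∈ e, χ u = χ v)
    {u v : V} (h : (SimpleGraph.fromEdgeSet E₁).Reachable u v) : χ u = χ v := by
  obtain ⟨p⟩ := h
  induction p with
  | nil => rfl
  | @cons a b c hab _ ih =>
    have h1 : s(a, b) ∈ E₁ := ((SimpleGraph.fromEdgeSet_adj _).mp hab).1
    have h2 : χ a = χ b := hmono _ h1 a (by simp) b (by simp)
    exact h2.trans ih

lemma finsum_mem_mono {α : Type*} {w : α → ℝ} {s t : Set α} (hst : s ⊆ t) (ht : t.Finite)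
    (hw : ∀ e ∈ t, 0 ≤ w e) : ∑ᶠ e ∈ s, w e ≤ ∑ᶠ e ∈ t, w e := by
  have hs : s.Finite := ht.subset hst
  rw [finsum_mem_eq_finite_toFinset_sum _ hs, finsum_mem_eq_finite_toFinset_sum _ ht]
  refine Finset.sum_le_sum_of_subset_of_nonneg ?_ ?_
  · intro x hx
    simp only [Set.Finite.mem_toFinset] at *
    exact hst hx
  · intro x hx _
    exact hw x (ht.mem_toFinset.mp hx)

/-- the maximum total weight of a feasible subset of edges equals the maximum
kept weight over proper colorings. -/
theorem stmt_1 {V : Type*} [Fintype V] (G : SimpleGraph V) (hG : G.Connected)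
    (w : Sym2 V → ℝ) (hw : ∀ e ∈ G.edgeSet, 0 < w e)
    (ℱ : Set (Set V)) (hF : ∀ F ∈ ℱ, 2 ≤ F.ncard) :
    ∃ m : ℝ,
      IsGreatest {x : ℝ | ∃ E₁ ⊆ G.edgeSet, Feasible E₁ ℱ ∧ x = ∑ᶠ e ∈ E₁, w e} m ∧
      IsGreatest {x : ℝ | ∃ χ : V → ℕ, ProperColoring χ ℱ ∧ x = keptWeight G w χ} m := by
  classical
  set S1 : Set ℝ := {x : ℝ | ∃ E₁ ⊆ G.edgeSet, Feasible E₁ ℱ ∧ x = ∑ᶠ e ∈ E₁, w e} with hS1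
  set S2 : Set ℝ := {x : ℝ | ∃ χ : V → ℕ, ProperColoring χ ℱ ∧ x = keptWeight G w χ} with hS2
  -- Direction 2: every kept weight is a feasible-subset weight.
  have hsub : S2 ⊆ S1 := by
    rintro x ⟨χ, hχ, rfl⟩
    refine ⟨{e ∈ G.edgeSet | ∀ u ∈ e, ∀ v ∈ e, χ u = χ v}, fun e he => he.1, ?_, rfl⟩
    intro F hFmem hall
    have hne : F.Nonempty := by
      rcases Set.eq_empty_or_nonempty F with h | h
      · exfalso; have := hF F hFmem; rw [h] at this; simp at this
      · exact h
    obtain ⟨x0, hx0⟩ := hne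
    refine hχ F hFmem ⟨χ x0, fun v hv => ?_⟩
    exact (reach_color_eq (fun e he => he.2) (hall v hv x0 hx0))
  -- Direction 1: every feasible-subset weight is dominated by a kept weight.
  have hdom : ∀ x ∈ S1, ∃ y ∈ S2, x ≤ y := by
    rintro x ⟨E₁, hE₁sub, hE₁feas, rfl⟩
    have : Countable ((SimpleGraph.fromEdgeSet E₁).ConnectedComponent) := by
      infer_instance
    obtain ⟨f, hf⟩ := exists_injective_nat ((SimpleGraph.fromEdgeSet E₁).ConnectedComponent)
    set χ : V → ℕ := fun v => f ((SimpleGraph.fromEdgeSet E₁).connectedComponentMk v) with hχdef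
    have hiff : ∀ u v : V, χ u = χ v ↔ (SimpleGraph.fromEdgeSet E₁).Reachable u v := by
      intro u v
      constructor
      · intro h
        exact (SimpleGraph.ConnectedComponent.eq).mp (hf h)
      · intro h
        exact congrArg f ((SimpleGraph.ConnectedComponent.eq).mpr h)
    have hproper : ProperColoring χ ℱ := by
      rintro F hFmem ⟨j, hj⟩
      refine hE₁feas F hFmem (fun u hu v hv => ?_)
      exact (hiff u v).mp ((hj u hu).trans (hj v hv).symm)
    refine ⟨keptWeight G w χ, ⟨χ, hproper, rfl⟩, ?_⟩
    have hsubset : E₁ ⊆ {e ∈ G.edgeSet | ∀ u ∈ e, ∀ v ∈ e, χ u = χ v} := by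
      intro e he
      refine ⟨hE₁sub he, ?_⟩
      induction e using Sym2.ind with
      | _ a b =>
        have hadj : (SimpleGraph.fromEdgeSet E₁).Adj a b := by
          rw [SimpleGraph.fromEdgeSet_adj]
          exact ⟨he, G.ne_of_adj (hE₁sub he)⟩
        have hcol : χ a = χ b := (hiff a b).mpr hadj.reachable
        intro u hu v hv
        rcases Sym2.mem_iff.mp hu with rfl | rfl <;>
          rcases Sym2.mem_iff.mp hv with rfl | rfl <;> first | rfl | exact hcol | exact hcol.symm
    exact finsum_mem_mono hsubset
      ((Set.toFinite G.edgeSet).subset (fun e he => he.1))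
      (fun e he => (hw e he.1).le)
  -- S1 is finite and nonempty.
  have hfin : S1.Finite := by
    have : S1 ⊆ Set.range (fun E₁ : Set (Sym2 V) => ∑ᶠ e ∈ E₁, w e) := by
      rintro x ⟨E₁, _, _, rfl⟩
      exact ⟨E₁, rfl⟩
    exact (Set.finite_range _).subset this
  have hzero : (0 : ℝ) ∈ S1 := by
    refine ⟨∅, Set.empty_subset _, ?_, by simp⟩
    intro F hFmem hall
    have h2 : 2 ≤ F.ncard := hF F hFmem
    have hFfin : F.Finite := Set.toFinite F
    obtain ⟨a, b, ha, hb, hab⟩ := (Set.one_lt_ncard_iff hFfin).mp h2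
    have := hall a ha b hb
    rw [SimpleGraph.fromEdgeSet_empty, SimpleGraph.reachable_bot] at this
    exact hab this
  obtain ⟨m, hmS1, hmmax⟩ := Set.Finite.exists_maximalFor id S1 hfin ⟨0, hzero⟩
  have hub1 : ∀ x ∈ S1, x ≤ m := by
    intro x hx
    by_contra h
    push_neg at h
    exact absurd (hmmax hx h.le) (by simpa using h)
  obtain ⟨y, hyS2, hmy⟩ := hdom m hmS1
  have hym : y = m := le_antisymm (hub1 y (hsub hyS2)) hmy
  refine ⟨m, ⟨hmS1, hub1⟩, ⟨hym ▸ hyS2, fun x hx => hub1 x (hsub hx)⟩⟩
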